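/- If Null(Φ) ∩ 𝒦 ∩ 𝒫 = {0}, then the sublevel set {Θ ∈ 𝒦 ∩ 𝒫 : ‖Y − ΦΘ‖_F ≤ ‖Y‖_F} is a bounded subset of ℝ^{n×L}: there exists C > 0 such that every Θ in this set satisfies ‖Θ‖_F ≤ C. -/

import Mathlib

/-- Frobenius norm of a real matrix. -/
noncomputable def frob {a b : ℕ} (A : Matrix (Fin a) (Fin b) ℝ) : ℝ :=
  Real.sqrt (∑ i, ∑ j, (A i j) ^ 2)

/-- The set of a×b matrices whose every column has at most k nonzero entries. -/
def colSparse (a b k : ℕ) : Set (Matrix (Fin a) (Fin b) ℝ) :=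
  {Θ | ∀ l, ({i | Θ i l ≠ 0} : Set (Fin a)).ncard ≤ k}

/-- The set of a×b matrices having at most p nonzero rows. -/
def rowSparse (a b p : ℕ) : Set (Matrix (Fin a) (Fin b) ℝ) :=
  {Θ | ({i | ∃ l, Θ i l ≠ 0} : Set (Fin a)).ncard ≤ p}

noncomputable def emb {a b : ℕ} (A : Matrix (Fin a) (Fin b) ℝ) :
    EuclideanSpace ℝ (Fin a × Fin b) := WithLp.toLp 2 (fun ij : Fin a × Fin b => A ij.1 ij.2)

def unemb {a b : ℕ} (v : EuclideanSpace ℝ (Fin a × Fin b)) :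
    Matrix (Fin a) (Fin b) ℝ := Matrix.of fun i j => v (i, j)

lemma emb_unemb {a b : ℕ} (v : EuclideanSpace ℝ (Fin a × Fin b)) : emb (unemb v) = v := rfl
lemma unemb_emb {a b : ℕ} (A : Matrix (Fin a) (Fin b) ℝ) : unemb (emb A) = A := rfl
lemma emb_sub {a b : ℕ} (A B : Matrix (Fin a) (Fin b) ℝ) : emb (A - B) = emb A - emb B := rfl
lemma emb_smul {a b : ℕ} (c : ℝ) (A : Matrix (Fin a) (Fin b) ℝ) : emb (c • A) = c • emb A := rfl

lemma frob_eq_norm {a b : ℕ} (A : Matrix (Fin a) (Fin b) ℝ) : frob A = ‖emb A‖ := by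
  rw [EuclideanSpace.norm_eq, frob, Fintype.sum_prod_type]
  simp [emb, sq_abs]

lemma emb_eq_zero {a b : ℕ} {A : Matrix (Fin a) (Fin b) ℝ} (h : emb A = 0) : A = 0 := by
  ext i j
  exact congrArg (fun v : EuclideanSpace ℝ (Fin a × Fin b) => v (i, j)) h

lemma closed_card_le {X : Type*} [TopologicalSpace X] {ι : Type*} [Fintype ι]
    (P : ι → X → Prop) (hP : ∀ i, IsOpen {x | P i x}) (k : ℕ) :
    IsClosed {x | ({i | P i x} : Set ι).ncard ≤ k} := by
  rw [← isOpen_compl_iff]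
  have hset : {x | ({i | P i x} : Set ι).ncard ≤ k}ᶜ
      = ⋃ T ∈ {T : Finset ι | k < T.card}, ⋂ i ∈ T, {x | P i x} := by
    ext x
    simp only [Set.mem_compl_iff, Set.mem_setOf_eq, not_le, Set.mem_iUnion, Set.mem_iInter]
    constructor
    · intro h
      refine ⟨(Set.toFinite {i | P i x}).toFinset, ?_, fun i hi => by
        simpa using (Set.Finite.mem_toFinset _).mp hi⟩
      rw [Set.ncard_eq_toFinset_card _ (Set.toFinite _)] at h
      exact h
    · rintro ⟨T, hT, hTP⟩
      calc k < T.card := hT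
        _ = (T : Set ι).ncard := (Set.ncard_coe_finset T).symm
        _ ≤ ({i | P i x} : Set ι).ncard :=
            Set.ncard_le_ncard (fun i hi => hTP i hi) (Set.toFinite _)
  rw [hset]
  exact isOpen_biUnion fun T _ => isOpen_biInter_finset fun i _ => hP i

noncomputable def mulMapL {m n : ℕ} (L : ℕ) (Φ : Matrix (Fin m) (Fin n) ℝ) :
    EuclideanSpace ℝ (Fin n × Fin L) →ₗ[ℝ] EuclideanSpace ℝ (Fin m × Fin L) where
  toFun v := emb (Φ * unemb v)
  map_add' v w := by
    show emb (Φ * unemb (v + w)) = emb (Φ * unemb v) + emb (Φ * unemb w)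
    have h : unemb (v + w) = unemb v + unemb w := rfl
    rw [h, Matrix.mul_add]; rfl
  map_smul' c v := by
    show emb (Φ * unemb (c • v)) = c • emb (Φ * unemb v)
    have h : unemb (c • v) = c • unemb v := rfl
    rw [h, Matrix.mul_smul]; rfl

theorem stmt_3 (m n L k p : ℕ) (hm : 0 < m) (hn : 0 < n) (hL : 0 < L)
    (hk : 0 < k) (hp : 0 < p)
    (Φ : Matrix (Fin m) (Fin n) ℝ) (Y : Matrix (Fin m) (Fin L) ℝ)
    (hnull : {Θ : Matrix (Fin n) (Fin L) ℝ | Φ * Θ = 0} ∩ colSparse n L k ∩ rowSparse n L p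
      = {0}) :
    ∃ C : ℝ, 0 < C ∧
      ∀ Θ ∈ colSparse n L k ∩ rowSparse n L p,
        frob (Y - Φ * Θ) ≤ frob Y → frob Θ ≤ C := by
  set S : Set (Matrix (Fin n) (Fin L) ℝ) := colSparse n L k ∩ rowSparse n L p with hS
  -- S is a cone
  have hScone : ∀ (c : ℝ) (Θ : Matrix (Fin n) (Fin L) ℝ), Θ ∈ S → c • Θ ∈ S := by
    rintro c Θ ⟨h1, h2⟩
    constructor
    · intro l
      refine le_trans (Set.ncard_le_ncard ?_ (Set.toFinite _)) (h1 l)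
      intro i hi
      simp only [Set.mem_setOf_eq] at hi ⊢
      intro h0
      exact hi (by simp [Matrix.smul_apply, h0])
    · refine le_trans (Set.ncard_le_ncard ?_ (Set.toFinite _)) h2
      rintro i ⟨l, hl⟩
      refine ⟨l, fun h0 => hl ?_⟩
      simp [Matrix.smul_apply, h0]
  set V := EuclideanSpace ℝ (Fin n × Fin L) with hV
  set T : Set V := {v | unemb v ∈ S} with hT
  -- T is closed
  have hcoord : ∀ x : Fin n × Fin L, Continuous fun v : V => v x :=
    fun x => (EuclideanSpace.proj x).continuous
  have hTclosed : IsClosed T := by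
    have h1 : IsClosed {v : V | ∀ l, ({i | unemb v i l ≠ 0} : Set (Fin n)).ncard ≤ k} := by
      have : {v : V | ∀ l, ({i | unemb v i l ≠ 0} : Set (Fin n)).ncard ≤ k}
          = ⋂ l, {v : V | ({i | unemb v i l ≠ 0} : Set (Fin n)).ncard ≤ k} := by
        ext v; simp
      rw [this]
      refine isClosed_iInter fun l => closed_card_le (fun i v => unemb v i l ≠ 0) ?_ k
      intro i
      exact isOpen_ne.preimage (hcoord (i, l))
    have h2 : IsClosed {v : V | ({i | ∃ l, unemb v i l ≠ 0} : Set (Fin n)).ncard ≤ p} := by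
      refine closed_card_le (fun i v => ∃ l, unemb v i l ≠ 0) ?_ p
      intro i
      have : {v : V | ∃ l, unemb v i l ≠ 0} = ⋃ l, {v : V | unemb v i l ≠ 0} := by
        ext v; simp
      rw [this]
      exact isOpen_iUnion fun l => isOpen_ne.preimage (hcoord (i, l))
    exact h1.inter h2
  -- the compact set K
  set K : Set V := T ∩ {v | ‖v‖ = 1} with hK
  have hKclosed : IsClosed K := hTclosed.inter (isClosed_eq continuous_norm continuous_const)
  have hKbdd : Bornology.IsBounded K :=
    (Metric.isBounded_iff_subset_closedBall 0).mpr
      ⟨1, fun v hv => by simp [Metric.mem_closedBall, dist_zero_right, hv.2.le]⟩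
  have hKcompact : IsCompact K := Metric.isCompact_of_isClosed_isBounded hKclosed hKbdd
  -- K is nonempty
  have hKne : K.Nonempty := by
    refine ⟨EuclideanSpace.single ((⟨0, hn⟩ : Fin n), (⟨0, hL⟩ : Fin L)) (1 : ℝ), ?_, ?_⟩
    · constructor
      · intro l
        have hsub : ({i | unemb (EuclideanSpace.single ((⟨0, hn⟩ : Fin n), (⟨0, hL⟩ : Fin L))
            (1 : ℝ)) i l ≠ 0} : Set (Fin n)) ⊆ {(⟨0, hn⟩ : Fin n)} := by
          intro i hi
          simp only [Set.mem_setOf_eq, unemb, Matrix.of_apply,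
            EuclideanSpace.single_apply] at hi
          by_contra hne
          apply hi
          rw [if_neg]
          intro hEq
          exact hne (by simpa using congrArg Prod.fst hEq)
        calc _ ≤ ({(⟨0, hn⟩ : Fin n)} : Set (Fin n)).ncard :=
              Set.ncard_le_ncard hsub (Set.toFinite _)
          _ = 1 := Set.ncard_singleton _
          _ ≤ k := hk
      · have hsub : ({i | ∃ l, unemb (EuclideanSpace.single ((⟨0, hn⟩ : Fin n),
            (⟨0, hL⟩ : Fin L)) (1 : ℝ)) i l ≠ 0} : Set (Fin n)) ⊆ {(⟨0, hn⟩ : Fin n)} := by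
          rintro i ⟨l, hl⟩
          simp only [unemb, Matrix.of_apply, EuclideanSpace.single_apply] at hl
          by_contra hne
          apply hl
          rw [if_neg]
          intro hEq
          exact hne (by simpa using congrArg Prod.fst hEq)
        calc _ ≤ ({(⟨0, hn⟩ : Fin n)} : Set (Fin n)).ncard :=
              Set.ncard_le_ncard hsub (Set.toFinite _)
          _ = 1 := Set.ncard_singleton _
          _ ≤ p := hp
    · simp only [Set.mem_setOf_eq]
      rw [EuclideanSpace.norm_single]; norm_num
  -- minimize over K
  have hgcont : Continuous fun v : V => ‖mulMapL L Φ v‖ :=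
    ((mulMapL L Φ).continuous_of_finiteDimensional).norm
  obtain ⟨v₀, hv₀K, hmin⟩ := hKcompact.exists_isMinOn hKne hgcont.continuousOn
  set c₀ : ℝ := ‖mulMapL L Φ v₀‖ with hc₀
  have hc₀pos : 0 < c₀ := by
    rcases lt_or_eq_of_le (norm_nonneg (mulMapL L Φ v₀)) with h | h
    · exact h
    · exfalso
      have h0 : emb (Φ * unemb v₀) = 0 := by
        have := norm_eq_zero.mp h.symm
        exact this
      have hmul0 : Φ * unemb v₀ = 0 := emb_eq_zero h0
      have : unemb v₀ ∈ ({Θ : Matrix (Fin n) (Fin L) ℝ | Φ * Θ = 0} ∩ colSparse n L k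
          ∩ rowSparse n L p) := ⟨⟨hmul0, hv₀K.1.1⟩, hv₀K.1.2⟩
      rw [hnull] at this
      have hv0 : v₀ = 0 := by
        have h1 : unemb v₀ = 0 := this
        have : emb (unemb v₀) = emb (0 : Matrix (Fin n) (Fin L) ℝ) := by rw [h1]
        rw [emb_unemb] at this; exact this
      rw [hv0] at hv₀K
      simpa using hv₀K.2
  refine ⟨max 1 (2 * frob Y / c₀), lt_of_lt_of_le zero_lt_one (le_max_left _ _), ?_⟩
  intro Θ hΘ hres
  by_cases hΘ0 : Θ = 0
  · subst hΘ0
    have : frob (0 : Matrix (Fin n) (Fin L) ℝ) = 0 := by simp [frob]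
    rw [this]
    exact le_trans zero_le_one (le_max_left _ _)
  · set t : ℝ := frob Θ with ht
    have htnorm : t = ‖emb Θ‖ := frob_eq_norm Θ
    have htpos : 0 < t := by
      rw [htnorm]
      refine norm_pos_iff.mpr fun h => hΘ0 (emb_eq_zero h)
    set w : V := t⁻¹ • emb Θ with hw
    have hwT : w ∈ T := by
      have : unemb w = t⁻¹ • Θ := rfl
      show unemb w ∈ S
      rw [this]
      exact hScone _ _ hΘ
    have hwnorm : ‖w‖ = 1 := by
      rw [hw, norm_smul, ← htnorm, norm_inv, Real.norm_eq_abs, abs_of_pos htpos]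
      exact inv_mul_cancel₀ htpos.ne'
    have hwK : w ∈ K := ⟨hwT, hwnorm⟩
    have hmw : c₀ ≤ ‖mulMapL L Φ w‖ := hmin hwK
    have hgw : ‖mulMapL L Φ w‖ = t⁻¹ * ‖emb (Φ * Θ)‖ := by
      have h1 : mulMapL L Φ w = t⁻¹ • emb (Φ * Θ) := by
        have : mulMapL L Φ w = emb (Φ * unemb w) := rfl
        rw [this]
        have h2 : unemb w = t⁻¹ • Θ := rfl
        rw [h2, Matrix.mul_smul, emb_smul]
      rw [h1, norm_smul, norm_inv, Real.norm_eq_abs, abs_of_pos htpos]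
    have hbound : ‖emb (Φ * Θ)‖ ≤ 2 * frob Y := by
      have hdecomp : emb (Φ * Θ) = emb Y - emb (Y - Φ * Θ) := by
        rw [← emb_sub, sub_sub_cancel]
      calc ‖emb (Φ * Θ)‖ = ‖emb Y - emb (Y - Φ * Θ)‖ := by rw [hdecomp]
        _ ≤ ‖emb Y‖ + ‖emb (Y - Φ * Θ)‖ := norm_sub_le _ _
        _ = frob Y + frob (Y - Φ * Θ) := by rw [frob_eq_norm, frob_eq_norm]
        _ ≤ frob Y + frob Y := by linarith
        _ = 2 * frob Y := by ring
    have hstep : c₀ ≤ t⁻¹ * (2 * frob Y) := by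
      calc c₀ ≤ ‖mulMapL L Φ w‖ := hmw
        _ = t⁻¹ * ‖emb (Φ * Θ)‖ := hgw
        _ ≤ t⁻¹ * (2 * frob Y) := by
            exact mul_le_mul_of_nonneg_left hbound (inv_nonneg.mpr htpos.le)
    have : t ≤ 2 * frob Y / c₀ := by
      rw [le_div_iff₀ hc₀pos]
      have := mul_le_mul_of_nonneg_left hstep htpos.le
      calc t * c₀ ≤ t * (t⁻¹ * (2 * frob Y)) := this
        _ = 2 * frob Y := by field_simp
    exact le_trans this (le_max_right _ _)
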